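/- If R is a right SAP ring, then every two-sided ideal I of R satisfies I = I^2. -/

import Mathlib

/-- FP-injectivity (absolute purity). -/
def FPInjective (A : Type) [Ring A] (M : Type) [AddCommGroup M] [Module A M] : Prop :=
  ∀ (N : Type) [AddCommGroup N] [Module A N] (L : Submodule A N),
    Module.FinitePresentation A (N ⧸ L) →
      ∀ f : L →ₗ[A] M, ∃ g : N →ₗ[A] M, ∀ x : L, g x = f x

/-- The product `I * J` of two-sided ideals, as the two-sided ideal generated by products. -/
def tsiMul {R : Type} [Ring R] (I J : TwoSidedIdeal R) : TwoSidedIdeal R :=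
  TwoSidedIdeal.span {z : R | ∃ a ∈ I, ∃ b ∈ J, z = a * b}

open MulOpposite in
/-- If `R` is a right SAP ring then every two-sided ideal `I` of `R` satisfies `I = I²`. -/
theorem stmt2 (R : Type) [Ring R]
    (hSAP : ∀ (S : Type) [AddCommGroup S] [Module Rᵐᵒᵖ S],
      IsSimpleModule Rᵐᵒᵖ S → FPInjective Rᵐᵒᵖ S) :
    ∀ I : TwoSidedIdeal R, I = tsiMul I I := by
  intro I
  have hTI : tsiMul I I ≤ I := by
    intro x hx
    refine TwoSidedIdeal.mem_span_iff.mp hx I ?_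
    rintro z ⟨a, ha, b, hb, rfl⟩
    exact I.mul_mem_right a b ha
  refine le_antisymm ?_ hTI
  intro a haI
  by_contra haT
  set A := Rᵐᵒᵖ
  set T : Ideal A := TwoSidedIdeal.asIdealOpposite (tsiMul I I) with hT
  have hmemT : ∀ x : A, x ∈ T ↔ x.unop ∈ tsiMul I I := fun x =>
    TwoSidedIdeal.mem_asIdealOpposite
  -- the set of right ideals containing I² and avoiding a
  set 𝒮 : Set (Ideal A) := {K | T ≤ K ∧ op a ∉ K} with h𝒮
  have hT𝒮 : T ∈ 𝒮 := ⟨le_rfl, fun h => haT ((hmemT _).mp h)⟩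
  obtain ⟨K, -, hK⟩ := zorn_le_nonempty₀ 𝒮 (fun c hc hchain y hy => by
    refine ⟨sSup c, ⟨?_, ?_⟩, fun z hz => le_sSup hz⟩
    · exact le_trans (hc hy).1 (le_sSup hy)
    · intro hmem
      obtain ⟨J, hJc, hJ⟩ :=
        (Submodule.mem_sSup_of_directed ⟨y, hy⟩ hchain.directedOn).mp hmem
      exact (hc hJc).2 hJ) T hT𝒮
  obtain ⟨⟨hTK, haK⟩, hKmax⟩ := hK
  -- the simple module
  set s₀ : A ⧸ K := Submodule.Quotient.mk (op a) with hs₀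
  have hs₀ne : s₀ ≠ 0 := by
    rw [hs₀, Ne, Submodule.Quotient.mk_eq_zero]
    exact haK
  set S : Submodule A (A ⧸ K) := Submodule.span A {s₀} with hS
  -- every nonzero element of A ⧸ K generates a submodule containing s₀
  have hkey : ∀ x : A ⧸ K, x ≠ 0 → s₀ ∈ Submodule.span A {x} := by
    intro x hx
    set P : Ideal A := Submodule.comap K.mkQ (Submodule.span A {x}) with hP
    have hKP : K ≤ P := by
      intro k hk
      have : K.mkQ k = 0 := by simpa [Submodule.Quotient.mk_eq_zero] using hk
      simp [hP, Submodule.mem_comap, this]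
    have hPne : ¬ P ≤ K := by
      obtain ⟨y, rfl⟩ := Submodule.mkQ_surjective K x
      intro hle
      refine hx ?_
      have hyP : y ∈ P := by
        simp [hP, Submodule.mem_comap, Submodule.mem_span_singleton_self]
      simpa [Submodule.Quotient.mk_eq_zero] using hle hyP
    have hP𝒮 : P ∉ 𝒮 := fun hmem => hPne (hKmax hmem (le_trans hKP le_rfl))
    have haP : op a ∈ P := by
      by_contra hnot
      exact hP𝒮 ⟨le_trans hTK hKP, hnot⟩
    simpa [hP, Submodule.mem_comap] using haP
  have hSsimple : IsSimpleModule A S := by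
    have hnontriv : Nontrivial S := by
      refine ⟨⟨0, S.zero_mem⟩, ⟨s₀, Submodule.mem_span_singleton_self _⟩, fun h => ?_⟩
      exact hs₀ne (by simpa using (congrArg Subtype.val h).symm)
    refine (isSimpleModule_iff A S).mpr ⟨fun W => ?_⟩
    rcases eq_or_ne W ⊥ with h | h
    · exact Or.inl h
    · refine Or.inr ?_
      obtain ⟨w, hwW, hw0⟩ := (Submodule.ne_bot_iff W).mp h
      have hwval : (w : A ⧸ K) ≠ 0 := fun h0 => hw0 (Subtype.ext h0)
      have hs₀w : s₀ ∈ Submodule.span A {(w : A ⧸ K)} := hkey _ hwval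
      obtain ⟨c, hc⟩ := Submodule.mem_span_singleton.mp hs₀w
      have hsaW : (⟨s₀, Submodule.mem_span_singleton_self _⟩ : S) ∈ W := by
        have : (⟨s₀, Submodule.mem_span_singleton_self _⟩ : S) = c • w :=
          Subtype.ext (by simpa using hc.symm)
        rw [this]
        exact W.smul_mem c hwW
      refine eq_top_iff.mpr fun z _ => ?_
      obtain ⟨d, hd⟩ := Submodule.mem_span_singleton.mp z.2
      have : z = d • (⟨s₀, Submodule.mem_span_singleton_self _⟩ : S) :=
        Subtype.ext (by simpa using hd.symm)
      rw [this]
      exact W.smul_mem d hsaW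
  -- apply FP-injectivity to L = aA ⊆ A
  set L : Submodule A A := Submodule.span A {op a} with hL
  have hfp : Module.FinitePresentation A (A ⧸ L) := by
    refine Module.finitePresentation_of_free_of_surjective L.mkQ
      (Submodule.mkQ_surjective L) ?_
    rw [Submodule.ker_mkQ]
    exact Submodule.fg_span_singleton _
  have hmemS : ∀ x : L, K.mkQ (x : A) ∈ S := by
    rintro ⟨x, hx⟩
    obtain ⟨c, hc⟩ := Submodule.mem_span_singleton.mp hx
    subst hc
    exact (S.smul_mem c (Submodule.mem_span_singleton_self s₀) :)
  set f : L →ₗ[A] S := LinearMap.codRestrict S (K.mkQ.comp L.subtype) hmemS with hf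
  obtain ⟨g, hg⟩ := hSAP S hSsimple A L hfp f
  have hxa : (op a : A) ∈ L := Submodule.mem_span_singleton_self _
  have hga : g (op a) = f ⟨op a, hxa⟩ := hg ⟨op a, hxa⟩
  have hgane : g (op a) ≠ 0 := by
    rw [hga]
    intro h0
    have : K.mkQ (op a) = 0 := congrArg Subtype.val h0
    exact haK (by simpa [Submodule.Quotient.mk_eq_zero] using this)
  -- but g (op a) = op a • g 1 = 0
  obtain ⟨c, hc⟩ := Submodule.mem_span_singleton.mp (g 1).2
  have hprod : (op a * c * op a : A) ∈ K := by
    refine hTK ((hmemT _).mpr ?_)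
    have : (op a * c * op a : A).unop = a * c.unop * a := by
      simp [mul_assoc]
    rw [this]
    exact TwoSidedIdeal.mem_span_iff.mpr fun J hJ =>
      hJ ⟨a * c.unop, I.mul_mem_right a c.unop haI, a, haI, by rw [mul_assoc]⟩
  have hgzero : g (op a) = 0 := by
    have h1 : g (op a) = op a • g 1 := by
      rw [← map_smul]
      congr 1
      simp [smul_eq_mul]
    have h2 : ((g (op a) : S) : A ⧸ K) = op a • (c • s₀) := by
      rw [h1]
      have : ((op a • g 1 : S) : A ⧸ K) = op a • ((g 1 : S) : A ⧸ K) := rfl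
      rw [this, hc]
    have h3 : (op a • (c • s₀) : A ⧸ K) = Submodule.Quotient.mk (op a * c * op a) := by
      rw [hs₀, smul_smul, ← Submodule.Quotient.mk_smul]
      rfl
    have h4 : ((g (op a) : S) : A ⧸ K) = 0 := by
      rw [h2, h3, Submodule.Quotient.mk_eq_zero]
      exact hprod
    exact Subtype.ext h4
  exact hgane hgzero
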